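/- The exponential generating function f of the Catalan numbers satisfies the linear differential equation t·f''(t) + 2(1 − 2t)·f'(t) − 2·f(t) = 0 for every real t, together with f(0) = 1. -/

import Mathlib

set_option maxHeartbeats 1000000

open scoped Nat

/-- The exponential generating function of the Catalan numbers. -/
noncomputable def catalanEGF (t : ℝ) : ℝ := ∑' n : ℕ, (catalan n : ℝ) * t ^ n / n !

namespace CatalanEGFAux

lemma centralBinom_le_four_pow (n : ℕ) : n.centralBinom ≤ 4 ^ n := by
  induction n with
  | zero => simp [Nat.centralBinom_zero]
  | succ n ih =>
    have h := Nat.succ_mul_centralBinom_succ n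
    have h2 : (n + 1) * Nat.centralBinom (n + 1) ≤ (n + 1) * (4 * Nat.centralBinom n) := by
      rw [h]; nlinarith [Nat.centralBinom_pos n]
    have h3 := Nat.le_of_mul_le_mul_left h2 (Nat.succ_pos n)
    calc Nat.centralBinom (n + 1) ≤ 4 * Nat.centralBinom n := h3
      _ ≤ 4 * 4 ^ n := by omega
      _ = 4 ^ (n + 1) := by ring

lemma catalan_le_four_pow (n : ℕ) : (catalan n : ℝ) ≤ 4 ^ n := by
  have h1 : catalan n ≤ n.centralBinom := by
    have := succ_mul_catalan_eq_centralBinom n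
    nlinarith [catalan n, this]
  exact_mod_cast h1.trans (centralBinom_le_four_pow n)

lemma catalan_rec (n : ℕ) : (n + 2) * catalan (n + 1) = (4 * n + 2) * catalan n := by
  have h1 := succ_mul_catalan_eq_centralBinom (n + 1)
  have h2 := Nat.succ_mul_centralBinom_succ n
  have h3 := succ_mul_catalan_eq_centralBinom n
  have h4 : (n + 1) * ((n + 2) * catalan (n + 1)) = (n + 1) * ((4 * n + 2) * catalan n) := by
    rw [h1]
    calc (n + 1) * Nat.centralBinom (n + 1) = 2 * (2 * n + 1) * Nat.centralBinom n := h2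
      _ = 2 * (2 * n + 1) * ((n + 1) * catalan n) := by rw [h3]
      _ = (n + 1) * ((4 * n + 2) * catalan n) := by ring
  exact Nat.eq_of_mul_eq_mul_left (Nat.succ_pos n) h4

/-- Shifted EGF. -/
noncomputable def F (k : ℕ) (t : ℝ) : ℝ := ∑' n : ℕ, (catalan (n + k) : ℝ) * t ^ n / n !

lemma term_bound (k n : ℕ) (t : ℝ) :
    ‖((catalan (n + k) : ℝ) * t ^ n / n !)‖ ≤ 4 ^ k * ((4 * |t|) ^ n / n !) := by
  have h1 : (catalan (n + k) : ℝ) ≤ 4 ^ (n + k) := catalan_le_four_pow (n + k)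
  have hfact : (0:ℝ) < (n ! : ℝ) := by positivity
  rw [norm_div, norm_mul, norm_pow]
  simp only [Real.norm_natCast, Real.norm_eq_abs, Nat.abs_cast]
  have hrhs : 4 ^ k * ((4 * |t|) ^ n / (n ! : ℝ)) = 4 ^ (n + k) * |t| ^ n / n ! := by
    rw [mul_pow, pow_add]; ring
  rw [hrhs]
  gcongr

lemma summable_term (k : ℕ) (t : ℝ) :
    Summable (fun n : ℕ => (catalan (n + k) : ℝ) * t ^ n / n !) := by
  apply Summable.of_norm_bounded ((Real.summable_pow_div_factorial (4 * |t|)).mul_left (4 ^ k))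
  exact fun n => term_bound k n t

lemma hasSum_F (k : ℕ) (t : ℝ) :
    HasSum (fun n : ℕ => (catalan (n + k) : ℝ) * t ^ n / n !) (F k t) :=
  (summable_term k t).hasSum

lemma hasDerivAt_F (k : ℕ) (t : ℝ) : HasDerivAt (F k) (F (k + 1) t) t := by
  set R : ℝ := |t| + 1 with hR
  have hR0 : (0:ℝ) < R := by positivity
  set g : ℕ → ℝ → ℝ := fun n y => (catalan (n + k) : ℝ) * y ^ n / n ! with hg
  set g' : ℕ → ℝ → ℝ := fun n y => (catalan (n + k) : ℝ) * (n * y ^ (n - 1)) / n ! with hg'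
  set u : ℕ → ℝ := fun n => (catalan (n + k) : ℝ) * (n * R ^ (n - 1)) / n ! with hu
  have hu_sum : Summable u := by
    rw [← summable_nat_add_iff 1]
    have he : (fun n => u (n + 1)) = fun n => (catalan (n + (k + 1)) : ℝ) * R ^ n / n ! := by
      funext n
      simp only [hu]
      rw [Nat.add_sub_cancel, Nat.factorial_succ, show n + 1 + k = n + (k + 1) by omega]
      push_cast
      have h1 : ((n:ℝ) + 1) ≠ 0 := by positivity
      field_simp
      try ring
    rw [he]
    exact summable_term (k + 1) R
  have hderiv : ∀ n y, HasDerivAt (g n) (g' n y) y := by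
    intro n y
    have h1 : HasDerivAt (fun y : ℝ => y ^ n) ((n:ℝ) * y ^ (n - 1)) y := hasDerivAt_pow n y
    have h2 := (h1.const_mul ((catalan (n + k) : ℝ))).div_const (n ! : ℝ)
    simpa [hg, hg', mul_comm, mul_assoc, mul_left_comm] using h2
  have hbound : ∀ n y, y ∈ Metric.ball (0:ℝ) R → ‖g' n y‖ ≤ u n := by
    intro n y hy
    simp only [Metric.mem_ball, dist_zero_right, Real.norm_eq_abs] at hy
    simp only [hg', hu, norm_div, norm_mul, Real.norm_natCast, Real.norm_eq_abs, abs_pow,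
      Nat.abs_cast]
    have hyR : |y| ≤ R := le_of_lt hy
    gcongr
  have hmem : t ∈ Metric.ball (0:ℝ) R := by
    simp only [Metric.mem_ball, dist_zero_right, Real.norm_eq_abs, hR]
    linarith
  have h0mem : (0:ℝ) ∈ Metric.ball (0:ℝ) R := by
    simp [Metric.mem_ball, hR0]
  have hg0 : Summable fun n => g n 0 := summable_term k 0
  have main := hasDerivAt_tsum_of_isPreconnected hu_sum Metric.isOpen_ball
    (convex_ball (0:ℝ) R).isPreconnected (fun n y _ => hderiv n y) hbound h0mem hg0 hmem
  have hFk : F k = fun z => ∑' n, g n z := by funext z; rfl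
  rw [hFk]
  refine main.congr_deriv ?_
  symm
  have hsum' : Summable (fun n => g' n t) := by
    apply Summable.of_norm_bounded hu_sum
    exact fun n => hbound n t hmem
  rw [hsum'.tsum_eq_zero_add]
  have hz : g' 0 t = 0 := by simp [hg']
  rw [hz, zero_add]
  apply tsum_congr
  intro n
  simp only [hg']
  rw [Nat.add_sub_cancel, Nat.factorial_succ, show n + 1 + k = n + (k + 1) by omega]
  push_cast
  have h1 : ((n:ℝ) + 1) ≠ 0 := by positivity
  field_simp
  try ring

lemma catalanEGF_eq_F0 : catalanEGF = F 0 := by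
  funext t; unfold catalanEGF F; simp

lemma deriv_catalanEGF : deriv catalanEGF = F 1 := by
  rw [catalanEGF_eq_F0]
  funext t
  exact (hasDerivAt_F 0 t).deriv

end CatalanEGFAux

open CatalanEGFAux in
theorem catalan_egf_ode :
    (∀ t : ℝ, t * iteratedDeriv 2 catalanEGF t
        + 2 * (1 - 2 * t) * deriv catalanEGF t - 2 * catalanEGF t = 0)
    ∧ catalanEGF 0 = 1 := by
  constructor
  · intro t
    have h2deriv : iteratedDeriv 2 catalanEGF t = F 2 t := by
      rw [show (2:ℕ) = 1 + 1 from rfl, iteratedDeriv_succ, iteratedDeriv_one,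
        deriv_catalanEGF]
      exact (hasDerivAt_F 1 t).deriv
    rw [h2deriv, deriv_catalanEGF, catalanEGF_eq_F0]
    have h0 := hasSum_F 0 t
    have h1 := hasSum_F 1 t
    have h2 := hasSum_F 2 t
    simp only [Nat.add_zero] at h0
    have tF2 : HasSum (fun n : ℕ => (n : ℝ) * (catalan (n + 1) : ℝ) * t ^ n / n !)
        (t * F 2 t) := by
      set b : ℕ → ℝ := fun n => (n : ℝ) * (catalan (n + 1) : ℝ) * t ^ n / n ! with hb
      have hmul := h2.mul_left t
      have heq : (fun n : ℕ => t * ((catalan (n + 2) : ℝ) * t ^ n / n !))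
          = fun n : ℕ => b (n + 1) := by
        funext n
        simp only [hb]
        rw [Nat.factorial_succ, show n + 1 + 1 = n + 2 from rfl]
        push_cast
        have hne : ((n:ℝ) + 1) ≠ 0 := by positivity
        field_simp
        ring
      rw [heq] at hmul
      have h3 := (hasSum_nat_add_iff (f := b) 1).mp hmul
      simpa [hb] using h3
    have tF1 : HasSum (fun n : ℕ => (n : ℝ) * (catalan n : ℝ) * t ^ n / n !)
        (t * F 1 t) := by
      set b : ℕ → ℝ := fun n => (n : ℝ) * (catalan n : ℝ) * t ^ n / n ! with hb
      have hmul := h1.mul_left t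
      have heq : (fun n : ℕ => t * ((catalan (n + 1) : ℝ) * t ^ n / n !))
          = fun n : ℕ => b (n + 1) := by
        funext n
        simp only [hb]
        rw [Nat.factorial_succ]
        push_cast
        have hne : ((n:ℝ) + 1) ≠ 0 := by positivity
        field_simp
        ring
      rw [heq] at hmul
      have h3 := (hasSum_nat_add_iff (f := b) 1).mp hmul
      simpa [hb] using h3
    have total := (tF2.add (h1.mul_left 2)).sub ((tF1.mul_left 4).add (h0.mul_left 2))
    have hzero : (fun n : ℕ => ((n : ℝ) * (catalan (n + 1) : ℝ) * t ^ n / n !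
        + 2 * ((catalan (n + 1) : ℝ) * t ^ n / n !))
        - (4 * ((n : ℝ) * (catalan n : ℝ) * t ^ n / n !)
        + 2 * ((catalan n : ℝ) * t ^ n / n !))) = fun _ => (0:ℝ) := by
      funext n
      have hrec : ((n : ℝ) + 2) * (catalan (n + 1) : ℝ) = (4 * n + 2) * (catalan n : ℝ) := by
        exact_mod_cast catalan_rec n
      have key : ((n : ℝ) * (catalan (n + 1) : ℝ) * t ^ n / n !
          + 2 * ((catalan (n + 1) : ℝ) * t ^ n / n !))
          - (4 * ((n : ℝ) * (catalan n : ℝ) * t ^ n / n !)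
          + 2 * ((catalan n : ℝ) * t ^ n / n !))
          = (((n : ℝ) + 2) * (catalan (n + 1) : ℝ) - (4 * n + 2) * (catalan n : ℝ))
            * (t ^ n / n !) := by ring
      rw [key, hrec]
      ring
    rw [hzero] at total
    have hfinal := hasSum_zero.unique total
    linear_combination -hfinal
  · unfold catalanEGF
    rw [tsum_eq_single 0]
    · simp
    · intro n hn
      simp [zero_pow hn]
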